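/- Let T be a perfect unit-length tree with n leaves and let k be a positive integer with k ≤ n/2. Then m(T,k) ≤ m(T,n−k), i.e., there are at least as many size-(n−k) maxPD sets of T as size-k maxPD sets. Moreover, if A is a size-k maxPD set of T with k ≤ n/2, then X − A is a size-(n−k) maxPD set of T. -/

import Mathlib

/-!
Rooted phylogenetic `X`-trees with positive edge lengths.

A tree on a finite vertex type `V` is encoded by its parent function: the root
has no parent, every other vertex has one, and iterating the parent function
reaches the root.  The edge into a non-root vertex `v` has length `len v`, and
`hgt v` is the distance from the root to `v`.  Leaves are the vertices with no
children; the taxon set `X` of the paper is the set `leaves` of leaves.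
Every non-leaf, non-root vertex has out-degree (number of children) at least 2.
-/

noncomputable section

attribute [local instance] Classical.propDecidable

structure PhyloTree (V : Type) [Fintype V] [DecidableEq V] where
  root : V
  parent : V → Option V
  len : V → ℝ
  hgt : V → ℝ
  parent_root : parent root = none
  parent_isSome : ∀ v, v ≠ root → (parent v).isSome
  reaches_root : ∀ v, Relation.ReflTransGen (fun a b => parent a = some b) v root
  hgt_root : hgt root = 0
  hgt_eq : ∀ v u, parent v = some u → hgt v = hgt u + len v
  len_pos : ∀ v, v ≠ root → 0 < len v
  outdeg_ge_two : ∀ v, v ≠ root → (∃ u, parent u = some v) →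
    2 ≤ Set.ncard {u | parent u = some v}

namespace PhyloTree

variable {V : Type} [Fintype V] [DecidableEq V]

/-- `T.step a b` : `b` is the parent of `a`. -/
def step (T : PhyloTree V) (a b : V) : Prop := T.parent a = some b

/-- `T.anc u v` : `u` is an ancestor of `v`, i.e. `u` lies on the (unique) path
from the root to `v` (reflexively). -/
def anc (T : PhyloTree V) (u v : V) : Prop := Relation.ReflTransGen T.step v u

/-- a leaf is a vertex with no children. -/
def IsLeaf (T : PhyloTree V) (v : V) : Prop := ∀ u, T.parent u ≠ some v

/-- the leaf set (the taxon set `X`). -/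
def leaves (T : PhyloTree V) : Set V := {v | T.IsLeaf v}

/-- Phylogenetic diversity of a set `Y`: the total length of all edges `e`
whose set of descendant leaves meets `Y` (the edge into a non-root vertex `v`
has length `T.len v`). -/
def PD (T : PhyloTree V) (Y : Set V) : ℝ :=
  ∑ v : V, if v ≠ T.root ∧ ∃ x ∈ Y, T.IsLeaf x ∧ T.anc v x then T.len v else 0

/-- the ultrametric condition: all leaves are at the same distance from the root. -/
def Ultrametric (T : PhyloTree V) : Prop :=
  ∀ x y, T.IsLeaf x → T.IsLeaf y → T.hgt x = T.hgt y

/-- `R d`: the set of vertices within distance `d` above some leaf. -/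
def R (T : PhyloTree V) (d : ℝ) : Set V :=
  {v | ∃ x, T.IsLeaf x ∧ T.anc v x ∧ T.hgt x - T.hgt v ≤ d}

/-- adjacency in the forest induced by `T` on a vertex set `S`. -/
def adjIn (T : PhyloTree V) (S : Set V) (u v : V) : Prop :=
  u ∈ S ∧ v ∈ S ∧ (T.parent u = some v ∨ T.parent v = some u)

/-- the connected components of the forest induced by `T` on `S`. -/
def components (T : PhyloTree V) (S : Set V) : Set (Set V) :=
  {C | ∃ v ∈ S, C = S ∩ {u | Relation.ReflTransGen (T.adjIn S) v u}}

/-- `c d`: the number of connected components of the forest `T[R(d)]`. -/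
def ccount (T : PhyloTree V) (d : ℝ) : ℕ := (T.components (T.R d)).ncard

/-- `k` is a branching value if `T[R(d)]` has exactly `k` components for some `d ≥ 0`. -/
def IsBranchingValue (T : PhyloTree V) (k : ℕ) : Prop := ∃ d : ℝ, 0 ≤ d ∧ T.ccount d = k

/-- the branching distance `d_k = min {d : c(d) = k}`. -/
def branchDist (T : PhyloTree V) (k : ℕ) : ℝ := sInf {d | 0 ≤ d ∧ T.ccount d = k}

/-- `k⁻`: the largest branching value `≤ k`. -/
def kminus (T : PhyloTree V) (k : ℕ) : ℕ := sSup {j | j ≤ k ∧ T.IsBranchingValue j}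

/-- `k⁺`: the smallest branching value `≥ k`. -/
def kplus (T : PhyloTree V) (k : ℕ) : ℕ := sInf {j | k ≤ j ∧ T.IsBranchingValue j}

/-- `A` is a size-`k` maxPD set. -/
def IsMaxPD (T : PhyloTree V) (k : ℕ) (A : Set V) : Prop :=
  A ⊆ T.leaves ∧ A.ncard = k ∧ ∀ Y ⊆ T.leaves, Y.ncard = k → T.PD Y ≤ T.PD A

/-- `A` is a size-`k` minPD set. -/
def IsMinPD (T : PhyloTree V) (k : ℕ) (A : Set V) : Prop :=
  A ⊆ T.leaves ∧ A.ncard = k ∧ ∀ Y ⊆ T.leaves, Y.ncard = k → T.PD A ≤ T.PD Y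

/-- `m T k`: the number of size-`k` maxPD sets of `T`. -/
def m (T : PhyloTree V) (k : ℕ) : ℕ := {A : Set V | T.IsMaxPD k A}.ncard

/-- `T` is binary: every non-leaf vertex has exactly two children. -/
def Binary (T : PhyloTree V) : Prop :=
  ∀ v, ¬ T.IsLeaf v → Set.ncard {u | T.parent u = some v} = 2

end PhyloTree

namespace PhyloTree

variable {V : Type} [Fintype V] [DecidableEq V]

/-- a perfect unit-length tree of height `α`: a rooted binary phylogenetic tree
in which every edge has length `1` and every root-to-leaf path has exactly `α`
edges (so every leaf is at distance `α` from the root). -/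
def PerfectUnitLength (T : PhyloTree V) (α : ℕ) : Prop :=
  T.Binary ∧ (∀ v, v ≠ T.root → T.len v = 1) ∧ ∀ x, T.IsLeaf x → T.hgt x = (α : ℝ)
variable (T : PhyloTree V)

lemma ne_root_of_parent {u p : V} (h : T.parent u = some p) : u ≠ T.root := by
  intro e; rw [e, T.parent_root] at h; cases h

lemma leaf_anc_eq {z w : V} (hz : T.IsLeaf z) (h : T.anc z w) : w = z := by
  rcases Relation.ReflTransGen.cases_tail h with h1 | ⟨c, _, hc⟩
  · exact h1.symm
  · exact absurd hc (hz c)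

lemma hgt_nonneg : ∀ v : V, 0 ≤ T.hgt v := by
  intro v
  induction T.reaches_root v using Relation.ReflTransGen.head_induction_on with
  | refl => rw [T.hgt_root]
  | head h _ ih =>
    rename_i a c _
    have := T.hgt_eq a c h
    have := T.len_pos a (T.ne_root_of_parent h)
    linarith

lemma hgt_pos_of_ne_root {v : V} (hv : v ≠ T.root) : 0 < T.hgt v := by
  obtain ⟨u, hu⟩ := Option.isSome_iff_exists.mp (T.parent_isSome v hv)
  have := T.hgt_eq v u hu
  have := T.len_pos v hv
  have := T.hgt_nonneg u
  linarith

lemma anc_cases {u v : V} (h : T.anc u v) : u = v ∨ T.hgt u < T.hgt v := by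
  unfold anc at h
  induction h using Relation.ReflTransGen.head_induction_on with
  | refl => exact Or.inl rfl
  | head hs _ ih =>
    rename_i a c _
    right
    have h1 := T.hgt_eq a c hs
    have h2 := T.len_pos a (T.ne_root_of_parent hs)
    rcases ih with rfl | h3 <;> linarith

lemma exists_leaf_desc : ∀ v : V, ∃ x, T.IsLeaf x ∧ T.anc v x := by
  have key : ∀ N : ℕ, ∀ v : V,
      (Finset.univ.filter fun u => T.hgt v < T.hgt u).card ≤ N →
      ∃ x, T.IsLeaf x ∧ T.anc v x := by
    intro N
    induction N with
    | zero =>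
      intro v hv
      by_cases h : T.IsLeaf v
      · exact ⟨v, h, Relation.ReflTransGen.refl⟩
      · exfalso
        obtain ⟨u, hu⟩ : ∃ u, T.parent u = some v := by
          unfold IsLeaf at h; push_neg at h; exact h
        have hlt : T.hgt v < T.hgt u := by
          have := T.hgt_eq u v hu
          have := T.len_pos u (T.ne_root_of_parent hu)
          linarith
        have hmem : u ∈ Finset.univ.filter fun w => T.hgt v < T.hgt w := by
          simp [hlt]
        have := Finset.card_pos.mpr ⟨u, hmem⟩
        omega
    | succ N ihN =>
      intro v hv
      by_cases h : T.IsLeaf v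
      · exact ⟨v, h, Relation.ReflTransGen.refl⟩
      · obtain ⟨u, hu⟩ : ∃ u, T.parent u = some v := by
          unfold IsLeaf at h; push_neg at h; exact h
        have hlt : T.hgt v < T.hgt u := by
          have := T.hgt_eq u v hu
          have := T.len_pos u (T.ne_root_of_parent hu)
          linarith
        have hss : (Finset.univ.filter fun w => T.hgt u < T.hgt w) ⊂
            (Finset.univ.filter fun w => T.hgt v < T.hgt w) := by
          constructor
          · intro w hw
            simp only [Finset.mem_filter, Finset.mem_univ, true_and] at hw ⊢
            linarith
          · intro hsub
            have := hsub (by simp [hlt] : u ∈ _)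
            simp only [Finset.mem_filter, Finset.mem_univ, true_and] at this
            exact lt_irrefl _ this
        have hcard := Finset.card_lt_card hss
        obtain ⟨x, hx, hanc⟩ := ihN u (by omega)
        exact ⟨x, hx, Relation.ReflTransGen.tail hanc hu⟩
  intro v; exact key _ v le_rfl

lemma root_not_leaf {v : V} (hv : v ≠ T.root) : ¬ T.IsLeaf T.root := by
  rcases Relation.ReflTransGen.cases_tail (T.reaches_root v) with h1 | ⟨c, _, hc⟩
  · exact absurd h1.symm hv
  · intro hl; exact hl c hc

lemma leaf_ne_root (h2 : 2 ≤ T.leaves.ncard) {x : V} (hx : T.IsLeaf x) :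
    x ≠ T.root := by
  obtain ⟨a, b, ha, hb, hab⟩ := (Set.one_lt_ncard_iff (Set.toFinite _)).mp
    (by omega : 1 < T.leaves.ncard)
  have hroot : ¬ T.IsLeaf T.root := by
    by_cases hA : a = T.root
    · exact T.root_not_leaf (show b ≠ T.root from fun e => hab (hA.trans e.symm))
    · exact T.root_not_leaf hA
  intro e; exact hroot (e ▸ hx)

lemma children_are_leaves {α : ℕ} (hT : T.PerfectUnitLength α) {x p u : V}
    (hx : T.IsLeaf x) (hxp : T.parent x = some p) (hup : T.parent u = some p) :
    T.IsLeaf u := by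
  have hxr := T.ne_root_of_parent hxp
  have hur := T.ne_root_of_parent hup
  have hhx : T.hgt x = T.hgt p + 1 := by
    rw [T.hgt_eq x p hxp, hT.2.1 x hxr]
  have hhu : T.hgt u = T.hgt p + 1 := by
    rw [T.hgt_eq u p hup, hT.2.1 u hur]
  by_contra h
  obtain ⟨w, hw, hanc⟩ := T.exists_leaf_desc u
  have hne : u ≠ w := fun e => h (e ▸ hw)
  rcases T.anc_cases hanc with e | hlt
  · exact hne e
  · have h1 := hT.2.2 x hx
    have h2 := hT.2.2 w hw
    rw [hhu, ← hhx, h1, h2] at hlt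
    exact lt_irrefl _ hlt

/-- the set of parents of leaves. -/
def Pset : Set V := {p | ∃ x, T.IsLeaf x ∧ T.parent x = some p}

lemma not_leaf_of_mem_Pset {p : V} (hp : p ∈ T.Pset) : ¬ T.IsLeaf p := by
  obtain ⟨x, _, hxp⟩ := hp
  intro h; exact h x hxp

lemma ncard_leaves_eq {α : ℕ} (hT : T.PerfectUnitLength α)
    (h2 : 2 ≤ T.leaves.ncard) :
    T.leaves.ncard = 2 * T.Pset.ncard := by
  classical
  set pa : V → V := fun v => (T.parent v).getD T.root with hpa
  have hLf : T.leaves = ↑(Finset.univ.filter fun v => T.IsLeaf v) := by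
    ext v; simp [leaves]
  have hPf : T.Pset = ↑(Finset.univ.filter fun p => p ∈ T.Pset) := by
    ext p; simp
  rw [hLf, hPf, Set.ncard_coe_finset, Set.ncard_coe_finset]
  rw [Finset.card_eq_sum_card_fiberwise
    (f := pa) (t := Finset.univ.filter fun p => p ∈ T.Pset)
    (by
      intro x hx
      simp only [Finset.mem_coe, Finset.mem_filter, Finset.mem_univ, true_and] at hx ⊢
      obtain ⟨q, hq⟩ := Option.isSome_iff_exists.mp
        (T.parent_isSome x (T.leaf_ne_root h2 hx))
      have : pa x = q := by simp [hpa, hq]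
      rw [this]
      exact ⟨x, hx, hq⟩)]
  rw [Finset.sum_congr rfl (g := fun _ => 2)
    (by
      intro p hp
      simp only [Finset.mem_filter, Finset.mem_univ, true_and] at hp
      obtain ⟨x0, hx0, hx0p⟩ := hp
      have hfib : (Finset.univ.filter fun v => T.IsLeaf v).filter (fun x => pa x = p)
          = Finset.univ.filter fun u => T.parent u = some p := by
        ext u
        simp only [Finset.filter_filter, Finset.mem_filter, Finset.mem_univ, true_and]
        constructor
        · rintro ⟨hu, hpu⟩
          obtain ⟨q, hq⟩ := Option.isSome_iff_exists.mp
            (T.parent_isSome u (T.leaf_ne_root h2 hu))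
          have : pa u = q := by simp [hpa, hq]
          rw [this] at hpu; rw [hq, hpu]
        · intro hu
          refine ⟨T.children_are_leaves hT hx0 hx0p hu, ?_⟩
          simp [hpa, hu]
      rw [hfib]
      have := hT.1 p (T.not_leaf_of_mem_Pset ⟨x0, hx0, hx0p⟩)
      have hset : {u | T.parent u = some p}
          = ↑(Finset.univ.filter fun u => T.parent u = some p) := by ext u; simp
      rw [hset, Set.ncard_coe_finset] at this
      exact this)]
  rw [Finset.sum_const, smul_eq_mul, mul_comm]

lemma PD_eq_sum {α : ℕ} (hT : T.PerfectUnitLength α) (h2 : 2 ≤ T.leaves.ncard)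
    {Y : Set V} (hY : Y ⊆ T.leaves) :
    T.PD Y = (∑ v ∈ Finset.univ.filter (fun v => ¬ T.IsLeaf v),
      (if v ≠ T.root ∧ ∃ x ∈ Y, T.IsLeaf x ∧ T.anc v x then (1:ℝ) else 0))
      + Y.ncard := by
  classical
  unfold PD
  rw [← Finset.sum_filter_add_sum_filter_not Finset.univ (fun v => ¬ T.IsLeaf v)]
  congr 1
  · apply Finset.sum_congr rfl
    intro v hv
    by_cases hc : v ≠ T.root ∧ ∃ x ∈ Y, T.IsLeaf x ∧ T.anc v x
    · rw [if_pos hc, if_pos hc, hT.2.1 v hc.1]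
    · rw [if_neg hc, if_neg hc]
  · have hterm : ∀ v ∈ Finset.univ.filter (fun v => ¬¬ T.IsLeaf v),
        (if v ≠ T.root ∧ ∃ x ∈ Y, T.IsLeaf x ∧ T.anc v x then T.len v else 0)
        = if v ∈ Y then (1:ℝ) else 0 := by
      intro v hv
      simp only [Finset.mem_filter, Finset.mem_univ, true_and, not_not] at hv
      by_cases hvy : v ∈ Y
      · rw [if_pos hvy, if_pos ⟨T.leaf_ne_root h2 hv, v, hvy, hv,
          Relation.ReflTransGen.refl⟩, hT.2.1 v (T.leaf_ne_root h2 hv)]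
      · rw [if_neg hvy, if_neg]
        rintro ⟨-, x, hxY, -, hanc⟩
        exact hvy ((T.leaf_anc_eq hv hanc) ▸ hxY)
    rw [Finset.sum_congr rfl hterm, Finset.sum_boole]
    have hYf : Y = ↑((Finset.univ.filter fun v => ¬¬ T.IsLeaf v).filter
        (fun v => v ∈ Y)) := by
      ext y
      simp only [Finset.coe_filter, Finset.mem_filter, Finset.mem_univ, true_and,
        not_not, Set.mem_setOf_eq]
      exact ⟨fun h => ⟨hY h, h⟩, fun h => h.2⟩
    rw [hYf, Set.ncard_coe_finset]
    norm_cast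
    congr 1
    apply Finset.filter_congr
    intro x hx
    simp only [Finset.mem_filter, Finset.mem_univ, true_and, not_not] at hx
    simp [hx]

lemma exists_anc_leaf_parent {v : V} (h : ¬ T.IsLeaf v) :
    ∃ p ∈ T.Pset, T.anc v p := by
  obtain ⟨x, hx, hanc⟩ := T.exists_leaf_desc v
  rcases Relation.ReflTransGen.cases_head hanc with e | ⟨c, hc, hcv⟩
  · exact absurd (e ▸ hx) h
  · exact ⟨c, ⟨x, hx, hc⟩, hcv⟩

lemma exists_desc_not_mem {α : ℕ} (hT : T.PerfectUnitLength α) {A : Set V}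
    (hsf : ∀ x ∈ A, ∀ y ∈ A, ∀ p, T.parent x = some p → T.parent y = some p →
      x = y)
    {v : V} (h : ¬ T.IsLeaf v) : ∃ x, T.IsLeaf x ∧ T.anc v x ∧ x ∉ A := by
  obtain ⟨p, hp, hanc⟩ := T.exists_anc_leaf_parent h
  obtain ⟨x0, hx0, hx0p⟩ := hp
  have h2 := hT.1 p (T.not_leaf_of_mem_Pset ⟨x0, hx0, hx0p⟩)
  rw [Set.ncard_eq_two] at h2
  obtain ⟨c1, c2, hne, hset⟩ := h2
  have hc1 : T.parent c1 = some p := by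
    have : c1 ∈ {u | T.parent u = some p} := by rw [hset]; simp
    exact this
  have hc2 : T.parent c2 = some p := by
    have : c2 ∈ {u | T.parent u = some p} := by rw [hset]; simp
    exact this
  have hl1 := T.children_are_leaves hT hx0 hx0p hc1
  have hl2 := T.children_are_leaves hT hx0 hx0p hc2
  by_cases hm : c1 ∈ A
  · refine ⟨c2, hl2, Relation.ReflTransGen.head hc2 hanc, fun hm2 => ?_⟩
    exact hne (hsf c1 hm c2 hm2 p hc1 hc2)
  · exact ⟨c1, hl1, Relation.ReflTransGen.head hc1 hanc, hm⟩

lemma PD_eq_sum01 {α : ℕ} (hT : T.PerfectUnitLength α) (Y : Set V) :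
    T.PD Y = ∑ v : V,
      if (v ≠ T.root ∧ ∃ x ∈ Y, T.IsLeaf x ∧ T.anc v x) then (1:ℝ) else 0 := by
  unfold PD
  apply Finset.sum_congr rfl
  intro v _
  by_cases hc : v ≠ T.root ∧ ∃ x ∈ Y, T.IsLeaf x ∧ T.anc v x
  · rw [if_pos hc, if_pos hc, hT.2.1 v hc.1]
  · rw [if_neg hc, if_neg hc]

lemma sibling_free {α : ℕ} (hT : T.PerfectUnitLength α) {n k : ℕ}
    (hn : T.leaves.ncard = n) (hk2 : 2 * k ≤ n) {A : Set V}
    (hA : T.IsMaxPD k A) :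
    ∀ x ∈ A, ∀ y ∈ A, ∀ p, T.parent x = some p → T.parent y = some p →
      x = y := by
  intro x hxA y hyA p hxp hyp
  by_contra hxy
  obtain ⟨hAL, hAcard, hAmax⟩ := hA
  have hkge2 : 2 ≤ k := by
    rw [← hAcard]
    exact (Set.one_lt_ncard_iff (Set.toFinite _)).mpr ⟨x, y, hxA, hyA, hxy⟩
  have hn4 : 4 ≤ n := by omega
  have h2 : 2 ≤ T.leaves.ncard := by omega
  have hcount := T.ncard_leaves_eq hT h2
  set pa : V → V := fun v => (T.parent v).getD T.root with hpa
  have hpax : pa x = p := by simp [hpa, hxp]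
  have hpay : pa y = p := by simp [hpa, hyp]
  have himg : pa '' A = pa '' (A \ {y}) := by
    apply Set.Subset.antisymm
    · rintro q ⟨a, haA, rfl⟩
      by_cases hay : a = y
      · exact ⟨x, ⟨hxA, fun e => hxy e⟩, by rw [hpax, ← hpay, hay]⟩
      · exact ⟨a, ⟨haA, hay⟩, rfl⟩
    · exact Set.image_mono Set.diff_subset
  have hcard1 : (pa '' A).ncard ≤ k - 1 := by
    rw [himg]
    calc (pa '' (A \ {y})).ncard ≤ (A \ {y}).ncard :=
          Set.ncard_image_le (Set.toFinite _)
    _ = k - 1 := by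
          rw [Set.ncard_diff_singleton_of_mem hyA, hAcard]
  have hPn : 2 * T.Pset.ncard = n := by rw [← hcount, hn]
  have hex : ∃ p', p' ∈ T.Pset ∧ p' ∉ pa '' A := by
    by_contra hc; push_neg at hc
    have hsub : T.Pset ⊆ pa '' A := hc
    have := Set.ncard_le_ncard hsub (Set.toFinite _)
    omega
  obtain ⟨p', hp'P, hp'img⟩ := hex
  obtain ⟨z0, hz0leaf, hz0p⟩ := hp'P
  have hp'notleaf : ¬ T.IsLeaf p' := T.not_leaf_of_mem_Pset ⟨z0, hz0leaf, hz0p⟩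
  have hz0A : z0 ∉ A := fun h => hp'img ⟨z0, h, by simp [hpa, hz0p]⟩
  have hDp' : ∀ w, T.IsLeaf w → T.anc p' w → w ∉ A := by
    intro w hw hanc hwA
    rcases Relation.ReflTransGen.cases_tail hanc with e | ⟨c, hwc, hc⟩
    · exact hp'notleaf (by rw [e]; exact hw)
    · have hcleaf := T.children_are_leaves hT hz0leaf hz0p hc
      have hwceq : w = c := T.leaf_anc_eq hcleaf hwc
      have hwp : T.parent w = some p' := by rw [hwceq]; exact hc
      exact hp'img ⟨w, hwA, by simp [hpa, hwp]⟩
  have hp'root : p' ≠ T.root := by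
    intro e
    have hz0r : T.parent z0 = some T.root := by rw [← e]; exact hz0p
    have hα1 : (α : ℝ) = 1 := by
      have h1 := T.hgt_eq z0 T.root hz0r
      rw [T.hgt_root, hT.2.1 z0 (T.ne_root_of_parent hz0p)] at h1
      rw [← hT.2.2 z0 hz0leaf, h1]; ring
    have hsub : T.leaves ⊆ {u | T.parent u = some T.root} := by
      intro w hw
      obtain ⟨q, hq⟩ := Option.isSome_iff_exists.mp
        (T.parent_isSome w (T.leaf_ne_root h2 hw))
      have hq0 : T.hgt q = 0 := by
        have h1 := T.hgt_eq w q hq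
        rw [hT.2.1 w (T.ne_root_of_parent hq), hT.2.2 w hw, hα1] at h1
        linarith
      have hqr : q = T.root := by
        by_contra hqr
        exact absurd hq0 (ne_of_gt (T.hgt_pos_of_ne_root hqr))
      rw [← hqr]; exact hq
    have hroot_not_leaf : ¬ T.IsLeaf T.root := fun h => h z0 hz0r
    have hb := hT.1 T.root hroot_not_leaf
    have hle := Set.ncard_le_ncard hsub (Set.toFinite _)
    rw [hb, hn] at hle; omega
  obtain ⟨A', hA'⟩ : ∃ B : Set V, B = insert z0 (A \ {y}) := ⟨_, rfl⟩
  have hz0A' : z0 ∈ A' := by rw [hA']; exact Set.mem_insert _ _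
  have hmemA' : ∀ a ∈ A, a ≠ y → a ∈ A' := by
    intro a ha hay; rw [hA']; exact Set.mem_insert_of_mem _ ⟨ha, hay⟩
  have hyz0 : y ≠ z0 := fun e => hz0A (e ▸ hyA)
  have hsubA' : A' ⊆ T.leaves := by
    intro a ha
    rw [hA'] at ha
    rcases Set.mem_insert_iff.mp ha with rfl | h
    · exact hz0leaf
    · exact hAL h.1
  have hcardA' : A'.ncard = k := by
    rw [hA', Set.ncard_insert_of_notMem (fun h => hz0A h.1) (Set.toFinite _),
      Set.ncard_diff_singleton_of_mem hyA, hAcard]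
    omega
  have hz0root := T.ne_root_of_parent hz0p
  have hyp'ne : y ≠ p' := fun e => hp'notleaf (e ▸ hAL hyA)
  have hz0p'ne : z0 ≠ p' := fun e => hp'notleaf (e ▸ hz0leaf)
  have hpoint : ∀ v : V,
      (if v ≠ T.root ∧ ∃ w ∈ A, T.IsLeaf w ∧ T.anc v w then (1:ℝ) else 0)
      + ((if v = z0 then (1:ℝ) else 0) + (if v = p' then 1 else 0)
        - (if v = y then 1 else 0))
      ≤ (if v ≠ T.root ∧ ∃ w ∈ A', T.IsLeaf w ∧ T.anc v w then (1:ℝ) else 0) := by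
    intro v
    by_cases hvz : v = z0
    · subst hvz
      have hL : (if v ≠ T.root ∧ ∃ w ∈ A, T.IsLeaf w ∧ T.anc v w
          then (1:ℝ) else 0) = 0 := by
        rw [if_neg]
        rintro ⟨-, w, hwA, hwl, hanc⟩
        exact hz0A ((T.leaf_anc_eq hz0leaf hanc) ▸ hwA)
      have hR : (if v ≠ T.root ∧ ∃ w ∈ A', T.IsLeaf w ∧ T.anc v w
          then (1:ℝ) else 0) = 1 :=
        if_pos ⟨hz0root, v, hz0A', hz0leaf,
          Relation.ReflTransGen.refl⟩
      rw [hL, hR, if_pos rfl, if_neg hz0p'ne, if_neg (fun e => hyz0 e.symm)]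
      norm_num
    · by_cases hvp : v = p'
      · subst hvp
        have hL : (if v ≠ T.root ∧ ∃ w ∈ A, T.IsLeaf w ∧ T.anc v w
            then (1:ℝ) else 0) = 0 := by
          rw [if_neg]
          rintro ⟨-, w, hwA, hwl, hanc⟩
          exact hDp' w hwl hanc hwA
        have hR : (if v ≠ T.root ∧ ∃ w ∈ A', T.IsLeaf w ∧ T.anc v w
            then (1:ℝ) else 0) = 1 :=
          if_pos ⟨hp'root, z0, hz0A', hz0leaf,
            Relation.ReflTransGen.single hz0p⟩
        rw [hL, hR, if_neg hvz, if_pos rfl, if_neg (fun e => hyp'ne e.symm)]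
        norm_num
      · by_cases hvy : v = y
        · have h1 : (if v ≠ T.root ∧ ∃ w ∈ A, T.IsLeaf w ∧ T.anc v w
              then (1:ℝ) else 0) ≤ 1 := by
            split <;> norm_num
          have h0 : (0:ℝ) ≤ if v ≠ T.root ∧ ∃ w ∈ A', T.IsLeaf w ∧ T.anc v w
              then (1:ℝ) else 0 := by
            split <;> norm_num
          rw [if_neg hvz, if_neg hvp, if_pos hvy]
          linarith
        · rw [if_neg hvz, if_neg hvp, if_neg hvy]
          by_cases hc : v ≠ T.root ∧ ∃ w ∈ A, T.IsLeaf w ∧ T.anc v w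
          · obtain ⟨hvr, w, hwA, hwl, hanc⟩ := hc
            have hcond' : v ≠ T.root ∧ ∃ w ∈ A', T.IsLeaf w ∧ T.anc v w := by
              refine ⟨hvr, ?_⟩
              by_cases hwy : w = y
              · subst hwy
                rcases Relation.ReflTransGen.cases_head hanc with e | hh
                · exact absurd e.symm hvy
                · obtain ⟨c, hyc, hcv⟩ := hh
                  have hcp : c = p := by
                    have hyc' : T.parent w = some c := hyc
                    rw [hyp] at hyc'
                    exact (Option.some.inj hyc').symm
                  subst hcp
                  exact ⟨x, hmemA' x hxA (fun e => hxy e),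
                    hAL hxA, Relation.ReflTransGen.head hxp hcv⟩
              · exact ⟨w, hmemA' w hwA hwy, hwl, hanc⟩
            rw [if_pos (⟨hvr, w, hwA, hwl, hanc⟩ :
              v ≠ T.root ∧ ∃ w ∈ A, T.IsLeaf w ∧ T.anc v w), if_pos hcond']
            norm_num
          · rw [if_neg hc]
            have h0 : (0:ℝ) ≤ if v ≠ T.root ∧ ∃ w ∈ A', T.IsLeaf w ∧ T.anc v w
                then (1:ℝ) else 0 := by
              split <;> norm_num
            linarith
  have hsum := Finset.sum_le_sum (fun v (_ : v ∈ Finset.univ) => hpoint v)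
  rw [Finset.sum_add_distrib] at hsum
  have hg : ∑ v : V, ((if v = z0 then (1:ℝ) else 0) + (if v = p' then 1 else 0)
      - (if v = y then 1 else 0)) = 1 := by
    rw [Finset.sum_sub_distrib, Finset.sum_add_distrib]
    simp
  rw [hg] at hsum
  rw [← T.PD_eq_sum01 hT A, ← T.PD_eq_sum01 hT A'] at hsum
  have := hAmax A' hsubA' hcardA'
  linarith

end PhyloTree

/-- For a perfect unit-length tree on `n` leaves and
`k ≤ n/2`, there are at least as many size-`(n−k)` maxPD sets as size-`k`
maxPD sets; moreover the complement (within the leaf set `X`) of any size-`k`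
maxPD set is a size-`(n−k)` maxPD set. -/
theorem m_le_m_complement_perfect_unit_length
    {V : Type} [Fintype V] [DecidableEq V] (T : PhyloTree V)
    (α : ℕ) (hT : T.PerfectUnitLength α) (n k : ℕ)
    (hn : T.leaves.ncard = n) (hk : 1 ≤ k) (hk2 : 2 * k ≤ n) :
    T.m k ≤ T.m (n - k) ∧
    ∀ A : Set V, T.IsMaxPD k A → T.IsMaxPD (n - k) (T.leaves \ A) := by
  have h2 : 2 ≤ T.leaves.ncard := by omega
  have hcompl : ∀ A : Set V, T.IsMaxPD k A →
      T.IsMaxPD (n - k) (T.leaves \ A) := by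
    intro A hA
    have hsf := T.sibling_free hT hn hk2 hA
    obtain ⟨hAL, hAcard, hAmax⟩ := hA
    have hBsub : T.leaves \ A ⊆ T.leaves := Set.diff_subset
    have hBcard : (T.leaves \ A).ncard = n - k := by
      rw [Set.ncard_diff hAL (Set.toFinite _), hAcard, hn]
    refine ⟨hBsub, hBcard, ?_⟩
    intro Z hZ hZcard
    rw [T.PD_eq_sum hT h2 hZ, T.PD_eq_sum hT h2 hBsub, hZcard, hBcard]
    refine add_le_add ?_ le_rfl
    apply Finset.sum_le_sum
    intro v hv
    simp only [Finset.mem_filter, Finset.mem_univ, true_and] at hv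
    by_cases hc : v ≠ T.root ∧ ∃ x ∈ Z, T.IsLeaf x ∧ T.anc v x
    · have hcB : v ≠ T.root ∧ ∃ x ∈ T.leaves \ A, T.IsLeaf x ∧ T.anc v x := by
        obtain ⟨x, hxl, hanc, hxA⟩ := T.exists_desc_not_mem hT hsf hv
        exact ⟨hc.1, x, ⟨hxl, hxA⟩, hxl, hanc⟩
      rw [if_pos hc, if_pos hcB]
    · rw [if_neg hc]
      split <;> norm_num
  refine ⟨?_, hcompl⟩
  have hinj : Set.InjOn (fun A => T.leaves \ A) {A : Set V | T.IsMaxPD k A} := by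
    intro A hA B hB h
    have h' : T.leaves \ A = T.leaves \ B := h
    have h'' : T.leaves \ (T.leaves \ A) = T.leaves \ (T.leaves \ B) := by
      rw [h']
    rwa [Set.diff_diff_cancel_left hA.1, Set.diff_diff_cancel_left hB.1] at h''
  have himg : (fun A => T.leaves \ A) '' {A : Set V | T.IsMaxPD k A} ⊆
      {B : Set V | T.IsMaxPD (n - k) B} := by
    rintro B ⟨A, hA, rfl⟩
    exact hcompl A hA
  calc T.m k = ((fun A => T.leaves \ A) '' {A : Set V | T.IsMaxPD k A}).ncard :=
        (Set.ncard_image_of_injOn hinj).symm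
  _ ≤ T.m (n - k) := Set.ncard_le_ncard himg (Set.toFinite _)
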